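/- Let z ≥ 2, let X = Σ_{i=1}^{x} z^i c_i and Y = Σ_{j=1}^{y} z^j d_j with all digits in {1,...,z-1}, and let c be a digit with 0 < c < z. Then z·Y + z·c = Σ_{j=1}^{y+1} z^j d'_j where d'_1 = c and d'_{j+1} = d_j, and X/z − ((X/z) mod z) = Σ_{i=1}^{x-1} z^i c_{i+1}. Hence the update (X, Y) ↦ (X/z − (X/z mod z), zY + zc) correctly simulates moving the Turing machine tape head one cell to the left after writing symbol encoded by c in the scanned cell. -/

import Mathlib

lemma shift_sum (z cw : ℕ) (d : ℕ → ℕ) (y : ℕ) :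
    z * (∑ j ∈ Finset.Icc 1 y, z ^ j * d j) + z * cw =
      ∑ j ∈ Finset.Icc 1 (y + 1), z ^ j *
        (fun j => if j = 1 then cw else d (j - 1)) j := by
  induction y with
  | zero => simp
  | succ n ih =>
    rw [Finset.sum_Icc_succ_top (by omega : 1 ≤ n + 1),
        Finset.sum_Icc_succ_top (by omega : 1 ≤ n + 1 + 1)]
    simp only [show n + 1 + 1 ≠ 1 by omega, if_false]
    simp only [Nat.add_sub_cancel]
    rw [Nat.mul_add, ← ih]
    ring

lemma split_sum (z : ℕ) (c : ℕ → ℕ) (n : ℕ) :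
    ∑ i ∈ Finset.Icc 1 (n + 1), z ^ i * c i =
      z * c 1 + z * ∑ i ∈ Finset.Icc 1 n, z ^ i * c (i + 1) := by
  induction n with
  | zero => simp
  | succ m ih =>
    rw [Finset.sum_Icc_succ_top (by omega : 1 ≤ m + 1 + 1), ih,
        Finset.sum_Icc_succ_top (by omega : 1 ≤ m + 1)]
    ring

/-- Arithmetic correctness of the left-move update (top case of Equation (3)):
`z·Y + z·c` is the encoding of the right sequence extended by a new first cell
containing the write symbol `c`, and `X/z − ((X/z) mod z)` is the encoding of
the left sequence with its first cell removed. -/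
theorem left_move_update (z x y cw : ℕ) (c d : ℕ → ℕ) (hz : 2 ≤ z) (hx : 1 ≤ x)
    (hc : ∀ i, 1 ≤ i → i ≤ x → 0 < c i ∧ c i < z)
    (hd : ∀ j, 1 ≤ j → j ≤ y → 0 < d j ∧ d j < z)
    (hcw : 0 < cw ∧ cw < z) :
    (∃ d' : ℕ → ℕ, d' 1 = cw ∧ (∀ j, 1 ≤ j → j ≤ y → d' (j + 1) = d j) ∧
        z * (∑ j ∈ Finset.Icc 1 y, z ^ j * d j) + z * cw =
          ∑ j ∈ Finset.Icc 1 (y + 1), z ^ j * d' j) ∧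
    ((∑ i ∈ Finset.Icc 1 x, z ^ i * c i) / z -
        ((∑ i ∈ Finset.Icc 1 x, z ^ i * c i) / z) % z =
      ∑ i ∈ Finset.Icc 1 (x - 1), z ^ i * c (i + 1)) := by
  constructor
  · exact ⟨fun j => if j = 1 then cw else d (j - 1), by simp,
      fun j h1 h2 => by simp [show j + 1 ≠ 1 by omega, show j ≠ 0 by omega], shift_sum z cw d y⟩
  · obtain ⟨n, rfl⟩ : ∃ n, x = n + 1 := ⟨x - 1, by omega⟩
    simp only [Nat.add_sub_cancel]
    rw [split_sum]
    have hzpos : 0 < z := by omega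
    set T := ∑ i ∈ Finset.Icc 1 n, z ^ i * c (i + 1) with hT
    have hdvd : z ∣ T := Finset.dvd_sum fun i hi =>
      Dvd.dvd.mul_right (dvd_pow_self z (by simp at hi; omega)) _
    have h1 : (z * c 1 + z * T) / z = c 1 + T := by
      rw [← Nat.mul_add, Nat.mul_div_cancel_left _ hzpos]
    rw [h1]
    have hc1 : c 1 < z := (hc 1 le_rfl (by omega)).2
    obtain ⟨m, hm⟩ := hdvd
    rw [hm, Nat.add_mul_mod_self_left, Nat.mod_eq_of_lt hc1]
    omega
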